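/- Fix (ξ,η) ∈ ℂ² and let J act on tangent vectors by J(u,v) = (iu, iv). Then for all tangent vectors p, p' ∈ ℂ²: (i) ω_{(ξ,η)}(J p, J p') = ω_{(ξ,η)}(p, p') (the symplectic form is compatible with the complex structure); (ii) the bilinear form g(p,p') := ω_{(ξ,η)}(J p, p') is symmetric; and (iii) g(p,p) = 2·q_{(ξ,η)}(p), i.e. the symmetric form obtained from ω and J is (twice) the neutral Kähler metric. -/
import Mathlib


open Complex ComplexConjugate

/-- The symplectic form on the space `𝕋 ≅ ℂ²` of oriented lines, evaluated at the
point `(ξ,η)` on the pair of tangent vectors `p₁ = (u₁,v₁)`, `p₂ = (u₂,v₂)`. -/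
noncomputable def omegaT (ξ η : ℂ) (p₁ p₂ : ℂ × ℂ) : ℝ :=
  2 * ((2 / ((1 + normSq ξ : ℝ) : ℂ) ^ 2) * (p₁.2 * conj p₂.1 - p₂.2 * conj p₁.1) -
    (4 * conj ξ * η / ((1 + normSq ξ : ℝ) : ℂ) ^ 3) *
      (p₁.1 * conj p₂.1 - p₂.1 * conj p₁.1)).re

/-- The complex structure `J` acting on tangent vectors `(u,v) ∈ ℂ²`. -/
def Jmap (p : ℂ × ℂ) : ℂ × ℂ := (Complex.I * p.1, Complex.I * p.2)

/-- The neutral Kähler metric on the space `𝕋 ≅ ℂ²` of oriented lines, as a real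
quadratic form on the tangent vector `(u,v)` at the point `(ξ,η)`. -/
noncomputable def q (ξ η : ℂ) (p : ℂ × ℂ) : ℝ :=
  -4 * (p.2 * conj p.1).im / (1 + normSq ξ) ^ 2 -
    8 * (ξ * conj η).im * normSq p.1 / (1 + normSq ξ) ^ 3

/-- the symplectic form `ω` is compatible with the complex structure
`J`, the bilinear form `g(p,p') = ω(Jp,p')` is symmetric, and `g(p,p) = 2·q(p)`. -/
theorem kaehler_compatibility (ξ η : ℂ) :
    (∀ p p' : ℂ × ℂ, omegaT ξ η (Jmap p) (Jmap p') = omegaT ξ η p p') ∧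
    (∀ p p' : ℂ × ℂ, omegaT ξ η (Jmap p) p' = omegaT ξ η (Jmap p') p) ∧
    (∀ p : ℂ × ℂ, omegaT ξ η (Jmap p) p = 2 * q ξ η p) := by
  refine ⟨fun p p' => ?_, fun p p' => ?_, fun p => ?_⟩ <;>
  · simp only [omegaT, Jmap, q, div_mul_eq_mul_div, ← Complex.ofReal_pow,
      Complex.div_ofReal_re, map_mul, Complex.conj_I, Complex.sub_re, Complex.sub_im,
      Complex.add_re, Complex.add_im, Complex.neg_re, Complex.neg_im,
      Complex.mul_re, Complex.mul_im, Complex.conj_re, Complex.conj_im,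
      Complex.I_re, Complex.I_im, Complex.normSq_apply, Complex.re_ofNat, Complex.im_ofNat]
    ring
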